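/- Let n ≥ 2 and 2 ≤ k ≤ n+1. For any real numbers ξ_{ij}, 1 ≤ i < j ≤ k, with ξ_{ij} ≠ 0 for all i < j, there exist linearly independent vectors v_1, …, v_k ∈ ℝ^{2n} such that ⟨v_i, v_j⟩ = ξ_{ij} for all 1 ≤ i < j ≤ k. -/

import Mathlib

open Matrix

noncomputable section

abbrev Pairs (k : ℕ) := {p : Fin k × Fin k // p.1 < p.2}

/-- The standard symplectic matrix `J_n` with block form `(0 Iₙ; -Iₙ 0)`. -/
def Jmat (n : ℕ) : Matrix (Fin (2*n)) (Fin (2*n)) ℝ :=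
  fun i j => if (i : ℕ) + n = (j : ℕ) then 1 else if (j : ℕ) + n = (i : ℕ) then -1 else 0

/-- The standard symplectic form `⟨v,w⟩ = vᵀ Jₙ w` on `ℝ^{2n}`. -/
def symp (n : ℕ) (v w : Fin (2*n) → ℝ) : ℝ := v ⬝ᵥ (Jmat n).mulVec w

def lo (n : ℕ) (a : Fin n) : Fin (2*n) := ⟨a, by omega⟩
def hi (n : ℕ) (a : Fin n) : Fin (2*n) := ⟨n + a, by omega⟩
@[simp] lemma lo_val (n : ℕ) (a : Fin n) : (lo n a : ℕ) = a := rfl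
@[simp] lemma hi_val (n : ℕ) (a : Fin n) : (hi n a : ℕ) = n + a := rfl

lemma Jmul (n : ℕ) (w : Fin (2*n) → ℝ) (x : Fin (2*n)) :
    (Jmat n).mulVec w x =
      if h : (x:ℕ) < n then w ⟨(x:ℕ)+n, by omega⟩ else - w ⟨(x:ℕ)-n, by omega⟩ := by
  unfold Jmat Matrix.mulVec dotProduct
  by_cases h : (x:ℕ) < n
  · rw [dif_pos h, Finset.sum_eq_single (⟨(x:ℕ)+n, by omega⟩ : Fin (2*n))]
    · simp
    · intro y _ hy
      have h1 : ¬((x:ℕ) + n = (y:ℕ)) := fun e => hy (Fin.ext e.symm)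
      have h2 : ¬((y:ℕ) + n = (x:ℕ)) := by omega
      simp [h1, h2]
    · simp
  · rw [dif_neg h, Finset.sum_eq_single (⟨(x:ℕ)-n, by omega⟩ : Fin (2*n))]
    · have h1 : ¬((x:ℕ) + n = (x:ℕ)-n) := by omega
      have h2 : ((x:ℕ)-n) + n = (x:ℕ) := by omega
      simp [h1, h2]
    · intro y _ hy
      have h1 : ¬((x:ℕ) + n = (y:ℕ)) := by omega
      have h2 : ¬((y:ℕ) + n = (x:ℕ)) := fun e => hy (Fin.ext (show (y:ℕ) = (x:ℕ)-n by omega))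
      simp [h1, h2]
    · simp

def esum (n : ℕ) : Fin n ⊕ Fin n ≃ Fin (2*n) where
  toFun := Sum.elim (lo n) (hi n)
  invFun x := if h : (x:ℕ) < n then .inl ⟨x, h⟩ else .inr ⟨(x:ℕ)-n, by omega⟩
  left_inv s := by
    cases s with
    | inl a => simp [lo]
    | inr a => have : ¬ (n + (a:ℕ) < n) := by omega
               simp [hi, this]
  right_inv x := by
    by_cases h : (x:ℕ) < n
    · simp [h, lo]
    · simp only [dif_neg h]
      exact Fin.ext (by simp [hi]; omega)

lemma symp_eq (n : ℕ) (v w : Fin (2*n) → ℝ) :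
    symp n v w = ∑ a : Fin n, (v (lo n a) * w (hi n a) - v (hi n a) * w (lo n a)) := by
  calc symp n v w = ∑ x : Fin (2*n), v x * (Jmat n).mulVec w x := rfl
    _ = ∑ s : Fin n ⊕ Fin n, (v (esum n s) * (Jmat n).mulVec w (esum n s)) :=
        (Fintype.sum_equiv (esum n) _ _ (fun s => rfl)).symm
    _ = (∑ a : Fin n, v (lo n a) * (Jmat n).mulVec w (lo n a))
        + ∑ a : Fin n, v (hi n a) * (Jmat n).mulVec w (hi n a) := Fintype.sum_sum_type _
    _ = _ := by
        rw [← Finset.sum_add_distrib]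
        refine Finset.sum_congr rfl (fun a _ => ?_)
        rw [Jmul, Jmul]
        have h1 : (lo n a : ℕ) < n := a.isLt
        have h2 : ¬ ((hi n a : ℕ) < n) := by simp
        rw [dif_pos h1, dif_neg h2]
        have e1 : (⟨(lo n a : ℕ)+n, by omega⟩ : Fin (2*n)) = hi n a := Fin.ext (by simp; omega)
        have e2 : (⟨(hi n a : ℕ)-n, by omega⟩ : Fin (2*n)) = lo n a := Fin.ext (by simp)
        rw [e1, e2]; ring

def xif (k : ℕ) (ξ : Pairs k → ℝ) (a b : ℕ) : ℝ :=
  if h : a < b ∧ b < k then ξ ⟨(⟨a, h.1.trans h.2⟩, ⟨b, h.2⟩), h.1⟩ else 0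

lemma xif_eq (k : ℕ) (ξ : Pairs k → ℝ) (p : Pairs k) :
    xif k ξ p.1.1 p.1.2 = ξ p := by
  have h : ((p.1.1 : ℕ) < (p.1.2 : ℕ) ∧ (p.1.2 : ℕ) < k) := ⟨p.2, (p.1.2).isLt⟩
  rw [xif, dif_pos h]

lemma xif_zero (k : ℕ) (ξ : Pairs k → ℝ) (a b : ℕ) (h : ¬ (a < b ∧ b < k)) :
    xif k ξ a b = 0 := dif_neg h

/-- For `n ≥ 2` and `2 ≤ k ≤ n+1`, any tuple of nonzero prescribed values `ξ_{ij}` is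
attained at some linearly independent `v_1, …, v_k ∈ ℝ^{2n}` under the standard
symplectic form. -/
theorem stmt16 (n k : ℕ) (hn : 2 ≤ n) (hk2 : 2 ≤ k) (hk : k ≤ n + 1)
    (ξ : Pairs k → ℝ) (hξ : ∀ p, ξ p ≠ 0) :
    ∃ v : Fin k → (Fin (2*n) → ℝ), LinearIndependent ℝ v ∧
      ∀ p : Pairs k, symp n (v p.1.1) (v p.1.2) = ξ p := by
  set v : Fin k → Fin (2*n) → ℝ := fun i x =>
    (if (i:ℕ)+1 < k ∧ (x:ℕ) = (i:ℕ) then 1 else 0)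
      + (if n ≤ (x:ℕ) then xif k ξ ((x:ℕ)-n) (i:ℕ) else 0) with hv
  have hvlo : ∀ (i : Fin k) (a : Fin n),
      v i (lo n a) = (if (i:ℕ)+1 < k ∧ (a:ℕ) = (i:ℕ) then 1 else 0) := by
    intro i a
    have ha := a.isLt
    simp only [hv]; rw [lo_val]
    rw [if_neg (by omega : ¬ n ≤ (a:ℕ)), add_zero]
  have hvhi : ∀ (i : Fin k) (a : Fin n), v i (hi n a) = xif k ξ (a:ℕ) (i:ℕ) := by
    intro i a
    have hik := i.isLt
    simp only [hv]; rw [hi_val]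
    rw [if_neg (by omega : ¬((i:ℕ)+1 < k ∧ n + (a:ℕ) = (i:ℕ))),
      if_pos (Nat.le_add_right n a), zero_add, Nat.add_sub_cancel_left]
  refine ⟨v, ?_, ?_⟩
  · rw [Fintype.linearIndependent_iff]
    intro g hg i
    have hg' : ∀ x : Fin (2*n), ∑ j : Fin k, g j * v j x = 0 := by
      intro x
      have := congrFun hg x
      simpa [Finset.sum_apply] using this
    by_cases hlast : (i:ℕ)+1 < k
    · have hin : (i:ℕ) < n := by omega
      have h2 := hg' (lo n ⟨(i:ℕ), hin⟩)
      rw [Finset.sum_eq_single i (fun j _ hj => by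
          rw [hvlo, if_neg, mul_zero]
          rintro ⟨-, e⟩
          exact hj (Fin.ext (show (j:ℕ) = (i:ℕ) by simpa using e.symm)))
        (by simp)] at h2
      rw [hvlo, if_pos ⟨hlast, rfl⟩, mul_one] at h2
      exact h2
    · have hik : (i:ℕ) = k - 1 := by have := i.isLt; omega
      have hk2n : k - 2 < n := by omega
      have h2 := hg' (hi n ⟨k-2, hk2n⟩)
      rw [Finset.sum_eq_single i (fun j _ hj => by
          rw [hvhi, xif_zero _ _ _ _ (by
            rintro ⟨h1', h2'⟩
            exact hj (Fin.ext (show (j:ℕ) = (i:ℕ) by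
              simp only at h1'
              omega))), mul_zero])
        (by simp)] at h2
      rw [hvhi] at h2
      set p : Pairs k := ⟨(⟨k-2, by omega⟩, ⟨k-1, by omega⟩), by
        exact Fin.mk_lt_mk.mpr (by omega)⟩ with hp
      have hx : xif k ξ ((⟨k-2, hk2n⟩ : Fin n) : ℕ) ((i:ℕ)) = ξ p := by
        have := xif_eq k ξ p
        simp only [hp] at this
        rw [show ((⟨k-2, hk2n⟩ : Fin n) : ℕ) = (k-2 : ℕ) from rfl, hik]
        exact this
      rw [hx] at h2
      exact (mul_eq_zero.mp h2).resolve_right (hξ p)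
  · intro p
    have hij : (p.1.1 : ℕ) < (p.1.2 : ℕ) := p.2
    have hjk := (p.1.2).isLt
    rw [symp_eq]
    simp only [hvlo, hvhi]
    rw [Finset.sum_sub_distrib]
    have hin : (p.1.1 : ℕ) < n := by omega
    have hfirst : ∑ a : Fin n,
        (if (p.1.1:ℕ)+1 < k ∧ (a:ℕ) = (p.1.1:ℕ) then (1:ℝ) else 0) * xif k ξ (a:ℕ) (p.1.2:ℕ)
        = ξ p := by
      rw [Finset.sum_eq_single (⟨(p.1.1:ℕ), hin⟩ : Fin n) (fun a _ ha => by
          rw [if_neg, zero_mul]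
          rintro ⟨-, e⟩
          exact ha (Fin.ext (by simpa using e)))
        (by simp)]
      rw [if_pos ⟨by omega, rfl⟩, one_mul]
      exact xif_eq k ξ p
    have hsecond : ∑ a : Fin n,
        xif k ξ (a:ℕ) (p.1.1:ℕ) * (if (p.1.2:ℕ)+1 < k ∧ (a:ℕ) = (p.1.2:ℕ) then (1:ℝ) else 0)
        = 0 := by
      refine Finset.sum_eq_zero (fun a _ => ?_)
      by_cases hc : ((p.1.2:ℕ)+1 < k ∧ (a:ℕ) = (p.1.2:ℕ))
      · rw [if_pos hc, mul_one]
        exact xif_zero _ _ _ _ (by rintro ⟨h1', -⟩; omega)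
      · rw [if_neg hc, mul_zero]
    rw [hfirst, hsecond, sub_zero]
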